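/- For every k ≥ 1, in any BCP-compliant decision-tree refutation of F_k whose root node is labeled by one of the variables a, b, c, each of the two subtrees rooted at the children of the root contains at least k internal nodes (assigning one of a, b, c first falsifies one of the six literals p and forces the full unit-propagation cascade through the chain variables l₁ᵖ, …, l_kᵖ). -/

import Mathlib

/-- A variable is a natural number. -/
abbrev Var : Type := ℕ

/-- A literal is a pair of a variable and a Boolean. -/
abbrev Lit : Type := Var × Bool

/-- A clause is a finite set of literals. -/
abbrev Clause : Type := Finset Lit

/-- A CNF formula is a finite set of clauses. -/
abbrev CNF : Type := Finset Clause

/-- A partial assignment. -/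
abbrev PAssign : Type := Var → Option Bool

/-- A clause is falsified by a partial assignment if all its literals are false under it. -/
def Falsified (ρ : PAssign) (C : Clause) : Prop :=
  ∀ l ∈ C, ρ l.1 = some (!l.2)

/-- Extend a partial assignment by `v := b`. -/
def extendP (ρ : PAssign) (v : Var) (b : Bool) : PAssign :=
  fun w => if w = v then some b else ρ w

/-- Binary decision trees: leaves labeled by clauses, internal nodes labeled by a
variable, with `t0` the `v := false` child and `t1` the `v := true` child. -/
inductive DTree : Type where
  | leaf (C : Clause)
  | node (v : Var) (t0 t1 : DTree)

/-- Size of a decision tree: the number of internal nodes (decisions). -/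
def DTree.size : DTree → ℕ
  | .leaf _ => 0
  | .node _ t0 t1 => t0.size + t1.size + 1

/-- Correctness of a decision-tree (DLL) refutation of `α`, relative to the partial
assignment `ρ` accumulated along the path from the root: no variable occurs twice on
a path, and every leaf is labeled by a clause of `α` falsified by its path assignment. -/
def DLLOk (α : CNF) : PAssign → DTree → Prop
  | ρ, .leaf C => C ∈ α ∧ Falsified ρ C
  | ρ, .node v t0 t1 =>
      ρ v = none ∧ DLLOk α (extendP ρ v false) t0 ∧ DLLOk α (extendP ρ v true) t1

/-- A decision-tree (DLL) refutation of `α`. -/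
def IsDLLRefutation (α : CNF) (t : DTree) : Prop :=
  DLLOk α (fun _ => none) t

/-- Resolution trees: leaves labeled by clauses, internal nodes labeled by a clause
and a pivot variable, `t1` being the child whose clause contains `(v, true)` and
`t2` the child whose clause contains `(v, false)`. -/
inductive RTree : Type where
  | leaf (C : Clause)
  | node (C : Clause) (v : Var) (t1 t2 : RTree)

/-- The clause labeling the root of a resolution tree. -/
def RTree.clause : RTree → Clause
  | .leaf C => C
  | .node C _ _ _ => C

/-- Size of a resolution tree: the number of internal nodes. -/
def RTree.size : RTree → ℕ
  | .leaf _ => 0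
  | .node _ _ t1 t2 => t1.size + t2.size + 1

/-- Correctness of a tree-like resolution derivation from `α`: every leaf is a clause
of `α` and every internal node is the resolvent of its two children on its pivot. -/
def ResOk (α : CNF) : RTree → Prop
  | .leaf C => C ∈ α
  | .node C v t1 t2 =>
      ResOk α t1 ∧ ResOk α t2 ∧
      (v, true) ∈ t1.clause ∧ (v, false) ∈ t2.clause ∧
      C = t1.clause.erase (v, true) ∪ t2.clause.erase (v, false)

/-- A tree-like resolution refutation of `α`: a correct derivation of the empty clause. -/
def IsTLRRefutation (α : CNF) (t : RTree) : Prop :=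
  ResOk α t ∧ t.clause = ∅

/-- A total assignment satisfies a CNF formula if every clause contains a true literal. -/
def Satisfies (τ : Var → Bool) (α : CNF) : Prop :=
  ∀ C ∈ α, ∃ l ∈ C, τ l.1 = l.2

/-- A CNF formula is unsatisfiable if no total assignment satisfies it. -/
def Unsat (α : CNF) : Prop :=
  ∀ τ : Var → Bool, ¬ Satisfies τ α

/-- Every root-to-leaf path of the tree assigns every variable of `V`. -/
def AssignsAll (V : Finset Var) : PAssign → DTree → Prop
  | ρ, .leaf _ => ∀ v ∈ V, ρ v ≠ none
  | ρ, .node v t0 t1 =>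
      AssignsAll V (extendP ρ v false) t0 ∧ AssignsAll V (extendP ρ v true) t1

/-- A total-enumeration (TAE) refutation of `α` over `V`: a decision-tree refutation
in which every root-to-leaf path assigns every variable of `V`. -/
def IsTAERefutation (α : CNF) (V : Finset Var) (t : DTree) : Prop :=
  IsDLLRefutation α t ∧ AssignsAll V (fun _ => none) t

/-- `C` is a unit clause under `ρ` with unassigned literal `(v, b)`: exactly one
literal of `C` is unassigned and all other literals of `C` are false under `ρ`. -/
def UnitClause (ρ : PAssign) (C : Clause) (v : Var) (b : Bool) : Prop :=
  (v, b) ∈ C ∧ ρ v = none ∧ ∀ l ∈ C, l ≠ (v, b) → ρ l.1 = some (!l.2)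

/-- BCP-compliance of a decision tree: at every internal node whose path assignment
makes some clause of `α` unit, the node is labeled by the variable `v` of the
unassigned literal `(v, b)` of some unit clause `C` of `α`, and the child along the
edge `v := ¬b` is a leaf labeled by `C`. -/
def BCPOk (α : CNF) : PAssign → DTree → Prop
  | _, .leaf _ => True
  | ρ, .node v t0 t1 =>
      ((∃ C ∈ α, ∃ w b, UnitClause ρ C w b) →
        ∃ C ∈ α, ∃ b, UnitClause ρ C v b ∧
          cond b (t0 = DTree.leaf C) (t1 = DTree.leaf C)) ∧
      BCPOk α (extendP ρ v false) t0 ∧ BCPOk α (extendP ρ v true) t1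

/-- A BCP-compliant decision-tree refutation of `α`. -/
def IsBCPRefutation (α : CNF) (t : DTree) : Prop :=
  IsDLLRefutation α t ∧ BCPOk α (fun _ => none) t

/-- The variables of `α` all lie in `V`. -/
def VarsIn (α : CNF) (V : Finset Var) : Prop :=
  ∀ C ∈ α, ∀ l ∈ C, l.1 ∈ V

/-- The fresh chain variable `lᵢᵖ` for the literal `p = (x, s)` over `a, b, c`
(encoded as variables `0, 1, 2`); injective for `x < 3`, `i ≥ 1`, and disjoint
from `{0, 1, 2}`. -/
def chainVar (x : Var) (s : Bool) (i : ℕ) : Var :=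
  3 + (x + 3 * cond s 1 0) + 6 * i

/-- The eight width-3 clauses over the variables `a = 0`, `b = 1`, `c = 2`:
all possible disjunctions of literals of `a`, `b`, `c`. -/
def signClauses : Finset Clause :=
  (Finset.univ : Finset (Bool × Bool × Bool)).image
    (fun ε => ({(0, ε.1), (1, ε.2.1), (2, ε.2.2)} : Clause))

/-- For each of the six literals `p = (x, s)` over `a, b, c`, the chain clauses
`{p, l₁ᵖ}` and `{¬lᵢᵖ, l₍ᵢ₊₁₎ᵖ}` for `1 ≤ i ≤ k - 1`. -/
def chainClauses (k : ℕ) : Finset Clause :=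
  ((Finset.range 3) ×ˢ (Finset.univ : Finset Bool)).biUnion fun q =>
    insert ({(q.1, q.2), (chainVar q.1 q.2 1, true)} : Clause)
      ((Finset.Icc 1 (k - 1)).image fun i =>
        ({(chainVar q.1 q.2 i, false), (chainVar q.1 q.2 (i + 1), true)} : Clause))

/-- The formula `F_k` separating DLL from DLL + BCP. -/
def Fk (k : ℕ) : CNF := signClauses ∪ chainClauses k
lemma chainVar_ge (x : ℕ) (s : Bool) (i : ℕ) : (3:ℕ) ≤ chainVar x s i := by
  have h : (3:ℕ) + (x + 3 * cond s 1 0) + 6 * i = chainVar x s i := rfl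
  cases s <;> simp only [cond_false, cond_true] at h <;> omega

lemma chainVar_inj {x x' : ℕ} {s s' : Bool} {i i' : ℕ} (hx : x < 3) (hx' : x' < 3)
    (h : chainVar x s i = chainVar x' s' i') : x = x' ∧ s = s' ∧ i = i' := by
  have h' : (3:ℕ) + (x + 3 * cond s 1 0) + 6 * i
      = 3 + (x' + 3 * cond s' 1 0) + 6 * i' := h
  cases s <;> cases s' <;> simp only [cond_false, cond_true] at h'
  · exact ⟨by omega, rfl, by omega⟩
  · exact absurd h' (by omega)
  · exact absurd h' (by omega)
  · exact ⟨by omega, rfl, by omega⟩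

lemma mem_Fk {k : ℕ} {C : Clause} :
    C ∈ Fk k ↔
      (∃ e1 e2 e3 : Bool, C = {(0, e1), (1, e2), (2, e3)}) ∨
      (∃ q : ℕ, q < 3 ∧ ∃ s' : Bool,
        C = {(q, s'), (chainVar q s' 1, true)} ∨
        ∃ j, 1 ≤ j ∧ j ≤ k - 1 ∧
          C = {(chainVar q s' j, false), (chainVar q s' (j + 1), true)}) := by
  simp only [Fk, signClauses, chainClauses, Finset.mem_union, Finset.mem_image,
    Finset.mem_biUnion, Finset.mem_insert, Finset.mem_product, Finset.mem_range,
    Finset.mem_univ, Finset.mem_Icc, true_and, and_true, Prod.exists]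
  constructor
  · rintro (⟨e1, e2, e3, h⟩ | ⟨q, s', hq, (h | ⟨j, hj, h⟩)⟩)
    · exact Or.inl ⟨e1, e2, e3, h.symm⟩
    · exact Or.inr ⟨q, hq, s', Or.inl h⟩
    · exact Or.inr ⟨q, hq, s', Or.inr ⟨j, hj.1, hj.2, h.symm⟩⟩
  · rintro (⟨e1, e2, e3, h⟩ | ⟨q, hq, s', (h | ⟨j, hj1, hj2, h⟩)⟩)
    · exact Or.inl ⟨e1, e2, e3, h.symm⟩
    · exact Or.inr ⟨q, s', hq, Or.inl h⟩
    · exact Or.inr ⟨q, s', hq, Or.inr ⟨j, ⟨hj1, hj2⟩, h.symm⟩⟩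

/-- The invariant on the path assignment after the root decision `v := !s` and
`i` steps of the unit-propagation cascade through the chain of the literal `(v, s)`. -/
def InvP (v : ℕ) (s : Bool) (i : ℕ) (ρ : PAssign) : Prop :=
  ρ v = some (!s) ∧ (∀ u : ℕ, u < 3 → u ≠ v → ρ u = none) ∧
  ∀ (q : ℕ) (s' : Bool) (j : ℕ), q < 3 → 1 ≤ j →
    ρ (chainVar q s' j) = if q = v ∧ s' = s ∧ j ≤ i then some true else none

lemma InvP.chain_not_false {v : ℕ} {s : Bool} {i : ℕ} {ρ : PAssign}
    (h : InvP v s i ρ) {q : ℕ} {s' : Bool} {j : ℕ} (hq : q < 3) (hj : 1 ≤ j) :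
    ρ (chainVar q s' j) ≠ some false := by
  rw [h.2.2 q s' j hq hj]
  split <;> simp

lemma no_falsified {k : ℕ} {v : ℕ} (hv : v < 3) {s : Bool} {i : ℕ} {ρ : PAssign}
    (hInv : InvP v s i ρ) {C : Clause} (hC : C ∈ Fk k) : ¬ Falsified ρ C := by
  intro hf
  rcases mem_Fk.mp hC with ⟨e1, e2, e3, rfl⟩ | ⟨q, hq, s', (rfl | ⟨j, hj1, _, rfl⟩)⟩
  · have h0 : ρ 0 = some (!e1) := hf (0, e1) (by simp)
    have h1 : ρ 1 = some (!e2) := hf (1, e2) (by simp)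
    have h2 : ρ 2 = some (!e3) := hf (2, e3) (by simp)
    have hv3 : v = 0 ∨ v = 1 ∨ v = 2 := by omega
    rcases hv3 with rfl | rfl | rfl
    · rw [hInv.2.1 1 (by omega) (by omega)] at h1; exact nomatch h1
    · rw [hInv.2.1 0 (by omega) (by omega)] at h0; exact nomatch h0
    · rw [hInv.2.1 0 (by omega) (by omega)] at h0; exact nomatch h0
  · have h : ρ (chainVar q s' 1) = some (!true) := hf (chainVar q s' 1, true) (by simp)
    exact hInv.chain_not_false hq le_rfl h
  · have h : ρ (chainVar q s' (j + 1)) = some (!true) :=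
      hf (chainVar q s' (j + 1), true) (by simp)
    exact hInv.chain_not_false hq (by omega) h

lemma unit_shape {k : ℕ} {v : ℕ} (hv : v < 3) {s : Bool} {i : ℕ} {ρ : PAssign}
    (hInv : InvP v s i ρ) {C : Clause} (hC : C ∈ Fk k) {w : Var} {b : Bool}
    (hu : UnitClause ρ C w b) : w = chainVar v s (i + 1) ∧ b = true := by
  obtain ⟨hmem, hwnone, hoth⟩ := hu
  rcases mem_Fk.mp hC with ⟨e1, e2, e3, rfl⟩ | ⟨q, hq, s', (rfl | ⟨j, hj1, _, rfl⟩)⟩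
  · -- sign clause: impossible
    exfalso
    simp only [Finset.mem_insert, Finset.mem_singleton, Prod.mk.injEq] at hmem
    have hv3 : v = 0 ∨ v = 1 ∨ v = 2 := by omega
    rcases hmem with ⟨rfl, rfl⟩ | ⟨rfl, rfl⟩ | ⟨rfl, rfl⟩
    · -- w = 0 : literals (1,e2),(2,e3) must be assigned
      have h1 : ρ 1 = some (!e2) :=
        hoth (1, e2) (by simp) (by intro hh; exact absurd (congrArg Prod.fst hh) (by norm_num))
      have h2 : ρ 2 = some (!e3) :=
        hoth (2, e3) (by simp) (by intro hh; exact absurd (congrArg Prod.fst hh) (by norm_num))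
      rcases hv3 with rfl | rfl | rfl
      · rw [hInv.2.1 1 (by omega) (by omega)] at h1; exact nomatch h1
      · rw [hInv.2.1 2 (by omega) (by omega)] at h2; exact nomatch h2
      · rw [hInv.2.1 1 (by omega) (by omega)] at h1; exact nomatch h1
    · have h1 : ρ 0 = some (!e1) :=
        hoth (0, e1) (by simp) (by intro hh; exact absurd (congrArg Prod.fst hh) (by norm_num))
      have h2 : ρ 2 = some (!e3) :=
        hoth (2, e3) (by simp) (by intro hh; exact absurd (congrArg Prod.fst hh) (by norm_num))
      rcases hv3 with rfl | rfl | rfl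
      · rw [hInv.2.1 2 (by omega) (by omega)] at h2; exact nomatch h2
      · rw [hInv.2.1 0 (by omega) (by omega)] at h1; exact nomatch h1
      · rw [hInv.2.1 0 (by omega) (by omega)] at h1; exact nomatch h1
    · have h1 : ρ 0 = some (!e1) :=
        hoth (0, e1) (by simp) (by intro hh; exact absurd (congrArg Prod.fst hh) (by norm_num))
      have h2 : ρ 1 = some (!e2) :=
        hoth (1, e2) (by simp) (by intro hh; exact absurd (congrArg Prod.fst hh) (by norm_num))
      rcases hv3 with rfl | rfl | rfl
      · rw [hInv.2.1 1 (by omega) (by omega)] at h2; exact nomatch h2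
      · rw [hInv.2.1 0 (by omega) (by omega)] at h1; exact nomatch h1
      · rw [hInv.2.1 0 (by omega) (by omega)] at h1; exact nomatch h1
  · -- clause {(q, s'), (l₁, true)}
    have hge := chainVar_ge q s' 1
    have hne : ¬ ((q:ℕ) = chainVar q s' 1) := by omega
    simp only [Finset.mem_insert, Finset.mem_singleton, Prod.mk.injEq] at hmem
    rcases hmem with ⟨hw, hb⟩ | ⟨hw, hb⟩
    · exfalso
      have h : ρ (chainVar q s' 1) = some (!true) :=
        hoth (chainVar q s' 1, true) (by simp)
          (by intro hh; exact hne ((congrArg Prod.fst hh).trans hw).symm)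
      exact hInv.chain_not_false hq le_rfl h
    · subst hw; subst hb
      have hqv : ρ q = some (!s') :=
        hoth (q, s') (by simp) (by intro hh; exact hne (congrArg Prod.fst hh))
      by_cases hqveq : q = v
      · subst hqveq
        have hs : s' = s := by
          rw [hInv.1] at hqv
          exact Bool.not_inj (Option.some.inj hqv).symm
        subst hs
        have h1 := hInv.2.2 q s' 1 hq le_rfl
        rw [hwnone] at h1
        have hi0 : ¬ (1 ≤ i) := by
          intro hi; rw [if_pos ⟨rfl, rfl, hi⟩] at h1; exact nomatch h1
        have hieq : i = 0 := by omega
        subst hieq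
        exact ⟨rfl, rfl⟩
      · rw [hInv.2.1 q hq hqveq] at hqv; exact nomatch hqv
  · -- clause {(lⱼ, false), (lⱼ₊₁, true)}
    have hne : ¬ ((chainVar q s' j : ℕ) = chainVar q s' (j + 1)) := by
      intro h; have := chainVar_inj hq hq h; omega
    simp only [Finset.mem_insert, Finset.mem_singleton, Prod.mk.injEq] at hmem
    rcases hmem with ⟨hw, hb⟩ | ⟨hw, hb⟩
    · exfalso
      have h : ρ (chainVar q s' (j + 1)) = some (!true) :=
        hoth (chainVar q s' (j + 1), true) (by simp)
          (by intro hh; exact hne ((congrArg Prod.fst hh).trans hw).symm)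
      exact hInv.chain_not_false hq (by omega) h
    · subst hw; subst hb
      have hjv : ρ (chainVar q s' j) = some (!false) :=
        hoth (chainVar q s' j, false) (by simp)
          (by intro hh; exact hne (congrArg Prod.fst hh))
      rw [hInv.2.2 q s' j hq hj1] at hjv
      by_cases hcond : q = v ∧ s' = s ∧ j ≤ i
      · obtain ⟨rfl, rfl, hji⟩ := hcond
        have h2 := hInv.2.2 q s' (j + 1) hq (by omega)
        rw [hwnone] at h2
        have hji2 : ¬ (j + 1 ≤ i) := by
          intro hi; rw [if_pos ⟨rfl, rfl, hi⟩] at h2; exact nomatch h2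
        have hji' : j = i := by omega
        subst hji'
        exact ⟨rfl, rfl⟩
      · rw [if_neg hcond] at hjv; exact nomatch hjv

lemma exists_unit {k : ℕ} {v : ℕ} (hv : v < 3) {s : Bool} {i : ℕ} {ρ : PAssign}
    (hInv : InvP v s i ρ) (hik : i < k) :
    ∃ C ∈ Fk k, ∃ w b, UnitClause ρ C w b := by
  rcases Nat.eq_zero_or_pos i with rfl | hi
  · refine ⟨{(v, s), (chainVar v s 1, true)}, mem_Fk.mpr (Or.inr ⟨v, hv, s, Or.inl rfl⟩),
      chainVar v s 1, true, ?_, ?_, ?_⟩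
    · simp
    · rw [hInv.2.2 v s 1 hv le_rfl, if_neg (by rintro ⟨-, -, h⟩; omega)]
    · intro l hl hlne
      simp only [Finset.mem_insert, Finset.mem_singleton] at hl
      rcases hl with rfl | rfl
      · exact hInv.1
      · exact absurd rfl hlne
  · refine ⟨{(chainVar v s i, false), (chainVar v s (i + 1), true)},
      mem_Fk.mpr (Or.inr ⟨v, hv, s, Or.inr ⟨i, hi, by omega, rfl⟩⟩),
      chainVar v s (i + 1), true, ?_, ?_, ?_⟩
    · simp
    · rw [hInv.2.2 v s (i + 1) hv (by omega), if_neg (by rintro ⟨-, -, h⟩; omega)]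
    · intro l hl hlne
      simp only [Finset.mem_insert, Finset.mem_singleton] at hl
      rcases hl with rfl | rfl
      · show ρ (chainVar v s i) = some (!false)
        rw [hInv.2.2 v s i hv hi, if_pos ⟨rfl, rfl, le_rfl⟩]
        rfl
      · exact absurd rfl hlne

lemma InvP_step {v : ℕ} (hv : v < 3) {s : Bool} {i : ℕ} {ρ : PAssign}
    (hInv : InvP v s i ρ) :
    InvP v s (i + 1) (extendP ρ (chainVar v s (i + 1)) true) := by
  have hge := chainVar_ge v s (i + 1)
  refine ⟨?_, ?_, ?_⟩
  · rw [extendP, if_neg (show ¬ ((v:ℕ) = chainVar v s (i+1)) by omega)]; exact hInv.1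
  · intro u hu huv
    rw [extendP, if_neg (show ¬ ((u:ℕ) = chainVar v s (i+1)) by have := chainVar_ge v s (i+1); omega)]
    exact hInv.2.1 u hu huv
  · intro q s' j hq hj
    rw [extendP]
    by_cases h : (chainVar q s' j : ℕ) = chainVar v s (i + 1)
    · obtain ⟨rfl, rfl, rfl⟩ := chainVar_inj hq hv h
      rw [if_pos h, if_pos ⟨rfl, rfl, le_rfl⟩]
    · rw [if_neg h, hInv.2.2 q s' j hq hj]
      by_cases hc : q = v ∧ s' = s ∧ j ≤ i
      · rw [if_pos hc, if_pos ⟨hc.1, hc.2.1, by omega⟩]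
      · rw [if_neg hc, if_neg ?_]
        rintro ⟨rfl, rfl, hle⟩
        have hne : j ≠ i + 1 := fun hh => h (by rw [hh])
        exact hc ⟨rfl, rfl, by omega⟩

lemma cascade {k : ℕ} {v : ℕ} (hv : v < 3) {s : Bool} :
    ∀ (t : DTree) (i : ℕ) (ρ : PAssign), i < k → InvP v s i ρ →
      DLLOk (Fk k) ρ t → BCPOk (Fk k) ρ t → k - i ≤ t.size := by
  intro t
  induction t with
  | leaf C =>
    intro i ρ hik hInv hD _
    exact absurd hD.2 (no_falsified hv hInv hD.1)
  | node w s0 s1 ih0 ih1 =>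
    intro i ρ hik hInv hD hB
    obtain ⟨-, hD0, hD1⟩ := hD
    obtain ⟨hbcp, hB0, hB1⟩ := hB
    obtain ⟨C, hC, b, hu, hcond⟩ := hbcp (exists_unit hv hInv hik)
    obtain ⟨hw, hb⟩ := unit_shape hv hInv hC hu
    subst hw; subst hb
    have hInv' := InvP_step hv hInv
    have hs1 : k - (i + 1) ≤ s1.size := by
      rcases Nat.lt_or_ge (i + 1) k with h | h
      · exact ih1 (i + 1) _ h hInv' hD1 hB1
      · omega
    show k - i ≤ s0.size + s1.size + 1
    omega
lemma bcp_cascade_aux (k : ℕ) (hk : 1 ≤ k) (v : ℕ) (hv3 : v < 3) (t0 t1 : DTree)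
    (ht : IsBCPRefutation (Fk k) (DTree.node v t0 t1)) :
    k ≤ t0.size ∧ k ≤ t1.size := by
  obtain ⟨⟨-, hD0, hD1⟩, -, hB0, hB1⟩ := ht
  have hInit : ∀ b : Bool, InvP v (!b) 0 (extendP (fun _ => none) v b) := by
    intro b
    refine ⟨by rw [extendP, if_pos rfl]; simp, ?_, ?_⟩
    · intro u hu huv; rw [extendP, if_neg huv]
    · intro q s' j hq hj
      rw [extendP, if_neg (show ¬ (chainVar q s' j = v) by
            intro h; have h2 : (3:ℕ) ≤ v := h ▸ chainVar_ge q s' j; omega),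
        if_neg (by rintro ⟨-, -, h⟩; omega)]
  constructor
  · have h := cascade (k := k) hv3 (s := !false) t0 0 _ (by omega) (hInit false) hD0 hB0
    omega
  · have h := cascade (k := k) hv3 (s := !true) t1 0 _ (by omega) (hInit true) hD1 hB1
    omega
/-- For every `k ≥ 1`, in any BCP-compliant decision-tree refutation of
`F_k` whose root is labeled by one of the variables `a = 0`, `b = 1`, `c = 2`, each of
the two subtrees rooted at the children of the root has at least `k` internal nodes. -/
theorem bcp_cascade_lower_bound (k : ℕ) (hk : 1 ≤ k) (v : Var) (t0 t1 : DTree)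
    (hv : v = 0 ∨ v = 1 ∨ v = 2)
    (ht : IsBCPRefutation (Fk k) (DTree.node v t0 t1)) :
    k ≤ t0.size ∧ k ≤ t1.size :=
  bcp_cascade_aux k hk v (by rcases hv with rfl | rfl | rfl <;> norm_num) t0 t1 ht
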